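/- Let f ∈ ℝ[y₁,…,y_n] be a homogeneous polynomial of degree d which is strictly positive on the simplex Δ_n = {y ∈ ℝⁿ : y_i ≥ 0 for all i, Σ_i y_i = 1}, and let f_* = min_{y∈Δ_n} f(y) > 0. Then for every integer N > d(d−1)·‖f‖/(2 f_*) − d, all coefficients of the polynomial (y₁ + ⋯ + y_n)^N · f(y₁,…,y_n) are positive. -/

import Mathlib

open MvPolynomial

/-- The weighted coefficient norm `‖f‖ = max_α |f_α| · α₁!⋯α_n!/(α₁+⋯+α_n)!`. -/
noncomputable def wnorm {n : ℕ} (f : MvPolynomial (Fin n) ℝ) : ℝ :=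
  ↑(f.support.sup fun α =>
      ‖coeff α f‖₊ * (∏ i, ((α i).factorial : NNReal)) /
        (((α.sum fun _ e => e).factorial : NNReal)))

open Finset


lemma prod_X_pow_monomial {n : ℕ} (k : Fin n → ℕ) (s : Finset (Fin n)) :
    (∏ i ∈ s, (X i : MvPolynomial (Fin n) ℝ) ^ k i)
      = monomial (∑ i ∈ s, Finsupp.single i (k i)) 1 := by
  classical
  induction s using Finset.induction with
  | empty => simp [monomial_zero']
  | @insert a s ha ih =>
      rw [Finset.prod_insert ha, Finset.sum_insert ha, ih, X_pow_eq_monomial,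
        monomial_mul, one_mul]

lemma coeff_sum_X_pow {n : ℕ} (m : ℕ) (γ : Fin n →₀ ℕ) :
    coeff γ ((∑ i : Fin n, X i) ^ m : MvPolynomial (Fin n) ℝ) =
      if (γ.sum fun _ e => e) = m then (Nat.multinomial Finset.univ γ : ℝ) else 0 := by
  classical
  rw [Finset.sum_pow_eq_sum_piAntidiag, coeff_sum]
  have key : ∀ k : Fin n → ℕ,
      (∏ i : Fin n, (X i : MvPolynomial (Fin n) ℝ) ^ k i)
        = monomial (Finsupp.equivFunOnFinite.symm k) 1 := by
    intro k
    have h2 : (Finsupp.equivFunOnFinite.symm k : Fin n →₀ ℕ)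
        = ∑ i : Fin n, Finsupp.single i (k i) := by
      rw [← Finsupp.univ_sum_single (Finsupp.equivFunOnFinite.symm k)]
      simp
    rw [h2, prod_X_pow_monomial]
  have hterm : ∀ k : Fin n → ℕ,
      coeff γ ((Nat.multinomial Finset.univ k : MvPolynomial (Fin n) ℝ)
          * ∏ i : Fin n, (X i : MvPolynomial (Fin n) ℝ) ^ k i)
        = if k = ⇑γ then (Nat.multinomial Finset.univ k : ℝ) else 0 := by
    intro k
    rw [key, ← C_eq_coe_nat, coeff_C_mul, coeff_monomial]
    have : (Finsupp.equivFunOnFinite.symm k = γ) ↔ (k = ⇑γ) :=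
      Equiv.symm_apply_eq _
    by_cases h : k = ⇑γ <;> simp [this, h]
  simp only [hterm]
  rw [Finset.sum_ite_eq' (Finset.piAntidiag Finset.univ m) (⇑γ)
    (fun k => (Nat.multinomial Finset.univ k : ℝ))]
  have hmem : (⇑γ ∈ Finset.piAntidiag Finset.univ m) ↔ ((γ.sum fun _ e => e) = m) := by
    rw [Finset.mem_piAntidiag]
    simp [Finsupp.sum_fintype]
  by_cases h : (γ.sum fun _ e => e) = m <;> simp [hmem, h]

lemma key_coeff {n d N : ℕ} (f : MvPolynomial (Fin n) ℝ)
    (hd : ∀ α ∈ f.support, (α.sum fun _ e => e) = d)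
    (β : Fin n →₀ ℕ) (hβ : (β.sum fun _ e => e) = d + N) :
    (∏ i, ((β i).factorial : ℝ)) * coeff β ((∑ i, X i) ^ N * f) =
      (N.factorial : ℝ) *
        ∑ α ∈ f.support, coeff α f * ∏ i, ((β i).descFactorial (α i) : ℝ) := by
  classical
  rw [coeff_mul, Finset.mul_sum, Finset.mul_sum]
  -- restrict the right side to α ≤ β
  rw [← Finset.sum_filter_of_ne (p := fun α => α ≤ β) (s := f.support)
    (f := fun α => (N.factorial : ℝ) *
      (coeff α f * ∏ i, ((β i).descFactorial (α i) : ℝ)))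
    (by
      intro α hα hne
      by_contra hle
      obtain ⟨i, hi⟩ : ∃ i, β i < α i := by
        by_contra h
        push_neg at h
        exact hle (Finsupp.le_def.2 h)
      apply hne
      have : ((β i).descFactorial (α i) : ℝ) = 0 := by
        rw [Nat.descFactorial_eq_zero_iff_lt.2 hi]; simp
      have hzero : (∏ i, ((β i).descFactorial (α i) : ℝ)) = 0 :=
        Finset.prod_eq_zero (Finset.mem_univ i) this
      simp [hzero])]
  -- restrict the left side to pairs with x.2 ∈ f.support
  rw [← Finset.sum_filter_of_ne (p := fun x => x.2 ∈ f.support)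
    (s := Finset.HasAntidiagonal.antidiagonal β)
    (f := fun x => (∏ i, ((β i).factorial : ℝ)) *
      (coeff x.1 ((∑ i, X i) ^ N : MvPolynomial (Fin n) ℝ) * coeff x.2 f))
    (by
      intro x hx hne
      by_contra hsupp
      apply hne
      simp [MvPolynomial.notMem_support_iff.1 hsupp])]
  refine Finset.sum_nbij' (fun x => x.2) (fun α => (β - α, α)) ?_ ?_ ?_ ?_ ?_
  · intro x hx
    rw [Finset.mem_filter] at hx
    obtain ⟨hx1, hx2⟩ := hx
    rw [Finset.HasAntidiagonal.mem_antidiagonal] at hx1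
    rw [Finset.mem_filter]
    refine ⟨hx2, ?_⟩
    rw [← hx1]
    exact le_add_self
  · intro α hα
    rw [Finset.mem_filter] at hα
    rw [Finset.mem_filter, Finset.HasAntidiagonal.mem_antidiagonal]
    exact ⟨tsub_add_cancel_of_le hα.2, hα.1⟩
  · intro x hx
    rw [Finset.mem_filter, Finset.HasAntidiagonal.mem_antidiagonal] at hx
    have : β - x.2 = x.1 := by
      rw [← hx.1, add_tsub_cancel_right]
    exact Prod.ext this rfl
  · intro α hα; rfl
  · -- value equality
    intro x hx
    rw [Finset.mem_filter, Finset.HasAntidiagonal.mem_antidiagonal] at hx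
    obtain ⟨hx1, hx2⟩ := hx
    set α := x.2 with hα
    have hle : α ≤ β := by rw [← hx1]; exact le_add_self
    have hx1' : x.1 = β - α := by
      rw [← hx1]; exact (add_tsub_cancel_right x.1 α).symm
    have hsum : ((β - α).sum fun _ e => e) = N := by
      have hadd : ((β - α) + α).sum (fun _ e => e)
          = ((β - α).sum fun _ e => e) + (α.sum fun _ e => e) :=
        Finsupp.sum_add_index' (fun _ => rfl) (fun _ _ _ => rfl)
      rw [tsub_add_cancel_of_le hle] at hadd
      have hαd := hd α hx2
      omega
    rw [hx1', coeff_sum_X_pow, if_pos hsum]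
    -- now a numeric identity in ℕ cast to ℝ
    have hnat : (∏ i, (β i).factorial) * Nat.multinomial Finset.univ ⇑(β - α)
        = N.factorial * ∏ i, (β i).descFactorial (α i) := by
      have hfac : ∀ i : Fin n, (β i).factorial
          = (β i).descFactorial (α i) * ((β - α) i).factorial := by
        intro i
        have hi : α i ≤ β i := Finsupp.le_def.1 hle i
        rw [Finsupp.tsub_apply]
        rw [← Nat.factorial_mul_descFactorial hi]
        ring
      calc (∏ i, (β i).factorial) * Nat.multinomial Finset.univ ⇑(β - α)
          = (∏ i, (β i).descFactorial (α i)) *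
            ((∏ i, ((β - α) i).factorial) * Nat.multinomial Finset.univ ⇑(β - α)) := by
            rw [Finset.prod_congr rfl (fun i _ => hfac i), Finset.prod_mul_distrib]
            ring
        _ = (∏ i, (β i).descFactorial (α i)) * (∑ i, (β - α) i).factorial := by
            rw [Nat.multinomial_spec]
        _ = N.factorial * ∏ i, (β i).descFactorial (α i) := by
            have : (∑ i, (β - α) i) = N := by
              rw [← Finsupp.sum_fintype (β - α) (fun _ e => e) (fun _ => rfl)]
              exact hsum
            rw [this]; ring
    have hcast : (∏ i, ((β i).factorial : ℝ)) * (Nat.multinomial Finset.univ ⇑(β - α) : ℝ)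
        = (N.factorial : ℝ) * ∏ i, ((β i).descFactorial (α i) : ℝ) := by
      exact_mod_cast congrArg (Nat.cast : ℕ → ℝ) hnat
    calc (∏ i, ((β i).factorial : ℝ)) *
          ((Nat.multinomial Finset.univ ⇑(β - α) : ℝ) * coeff α f)
        = ((∏ i, ((β i).factorial : ℝ)) * (Nat.multinomial Finset.univ ⇑(β - α) : ℝ))
          * coeff α f := by ring
      _ = ((N.factorial : ℝ) * ∏ i, ((β i).descFactorial (α i) : ℝ)) * coeff α f := by
          rw [hcast]
      _ = (N.factorial : ℝ) * (coeff α f * ∏ i, ((β i).descFactorial (α i) : ℝ)) := by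
          ring



lemma pow_le_desc_add : ∀ (d s : ℕ), s ^ d ≤ s.descFactorial d + d.choose 2 * s ^ (d - 1)
  | 0, s => by simp
  | 1, s => by simp [Nat.descFactorial]
  | (e+2), s => by
      have ih := pow_le_desc_add (e+1) s
      set d := e + 1 with hd
      have hpow : s * s ^ (d - 1) = s ^ d := by
        conv_rhs => rw [show d = d - 1 + 1 from by omega, pow_succ']
      have h2 : s * s ^ d ≤ s * s.descFactorial d + d.choose 2 * s ^ d := by
        calc s * s ^ d ≤ s * (s.descFactorial d + d.choose 2 * s ^ (d - 1)) :=
              Nat.mul_le_mul_left _ ih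
          _ = s * s.descFactorial d + d.choose 2 * (s * s ^ (d - 1)) := by ring
          _ = s * s.descFactorial d + d.choose 2 * s ^ d := by rw [hpow]
      have h3 : s * s.descFactorial d ≤ s.descFactorial (d + 1) + d * s.descFactorial d := by
        rcases le_or_gt d s with h | h
        · have hds : s.descFactorial (d + 1) = (s - d) * s.descFactorial d :=
            Nat.descFactorial_succ s d
          rw [hds, ← add_mul]
          exact Nat.mul_le_mul_right _ (by omega)
        · rw [Nat.descFactorial_eq_zero_iff_lt.2 h,
            Nat.descFactorial_eq_zero_iff_lt.2 (by omega : s < d + 1)]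
          simp
      have h4 : d * s.descFactorial d ≤ d * s ^ d :=
        Nat.mul_le_mul_left _ (Nat.descFactorial_le_pow s d)
      have h5 : (d + 1).choose 2 = d + d.choose 2 := by
        rw [Nat.choose_succ_succ, Nat.choose_one_right]
      have h1 : s ^ (d + 1) = s * s ^ d := by rw [pow_succ]; ring
      have hgoal : s ^ (d + 1) ≤ s.descFactorial (d + 1) + (d + 1).choose 2 * s ^ d := by
        rw [h5, add_mul]
        linarith
      exact hgoal

theorem stmt14 (n d : ℕ) (f : MvPolynomial (Fin n) ℝ) (hf : f.IsHomogeneous d)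
    (hpos : ∀ y : Fin n → ℝ, (∀ i, 0 ≤ y i) → (∑ i, y i) = 1 → 0 < eval y f)
    (fstar : ℝ)
    (hfstar : IsLeast
      {r : ℝ | ∃ y : Fin n → ℝ, (∀ i, 0 ≤ y i) ∧ (∑ i, y i) = 1 ∧ eval y f = r} fstar)
    (hfpos : 0 < fstar)
    (N : ℕ) (hN : (d : ℝ) * ((d : ℝ) - 1) * wnorm f / (2 * fstar) - (d : ℝ) < (N : ℝ)) :
    ∀ α : Fin n →₀ ℕ, (α.sum fun _ e => e) = d + N →
      0 < coeff α ((∑ i, X i) ^ N * f) := by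
  classical
  intro β hβ
  set L : ℝ := wnorm f with hLdef
  have hL0 : 0 ≤ L := NNReal.coe_nonneg _
  -- degrees on the support of f
  have hdeg : ∀ α ∈ f.support, (α.sum fun _ e => e) = d := by
    intro α hα
    by_contra hne
    exact (mem_support_iff.1 hα) (hf.coeff_eq_zero hne)
  have hsum_fin : ∀ γ : Fin n →₀ ℕ, (γ.sum fun _ e => e) = ∑ i, γ i := fun γ =>
    Finsupp.sum_fintype γ _ (fun _ => rfl)
  -- the comparison polynomial g = (∑ X)^d
  set g : MvPolynomial (Fin n) ℝ := (∑ i, X i) ^ d with hgdef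
  have hgcoeff : ∀ α : Fin n →₀ ℕ, (α.sum fun _ e => e) = d →
      coeff α g = (Nat.multinomial Finset.univ ⇑α : ℝ) := by
    intro α h
    rw [hgdef, coeff_sum_X_pow, if_pos h]
  have hgdeg : ∀ α ∈ g.support, (α.sum fun _ e => e) = d := by
    intro α hα
    have h1 := mem_support_iff.1 hα
    rw [hgdef, coeff_sum_X_pow] at h1
    by_contra h
    exact h1 (if_neg h)
  have hsubset : f.support ⊆ g.support := by
    intro α hα
    rw [mem_support_iff, hgcoeff α (hdeg α hα)]
    exact_mod_cast (Nat.multinomial_pos _ _).ne'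
  have hgcoeff_nn : ∀ α ∈ g.support, 0 ≤ coeff α g := by
    intro α hα
    rw [hgcoeff α (hgdeg α hα)]
    positivity
  -- case d + N = 0
  rcases Nat.eq_zero_or_pos (d + N) with hs0 | hs1
  · have hd0 : d = 0 := by omega
    have hN0 : N = 0 := by omega
    have hβ0 : β = 0 := by
      ext i
      have h1 : ∑ j, β j = 0 := by rw [← hsum_fin]; omega
      simpa using Finset.sum_eq_zero_iff.1 h1 i (Finset.mem_univ i)
    obtain ⟨y0, hy0n, hy0s, hy0e⟩ := hfstar.1
    have hsupp0 : f.support ⊆ {0} := by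
      intro α hα
      rw [Finset.mem_singleton]
      have h1 : ∑ j, α j = 0 := by rw [← hsum_fin, hdeg α hα]; omega
      ext i
      simpa using Finset.sum_eq_zero_iff.1 h1 i (Finset.mem_univ i)
    have heval : eval y0 f = coeff 0 f := by
      rw [eval_eq']
      rcases Finset.subset_singleton_iff.1 hsupp0 with h | h
      · rw [h, Finset.sum_empty]
        have : f = 0 := support_eq_empty.1 h
        rw [this]; simp
      · rw [h, Finset.sum_singleton]; simp
    rw [hN0, pow_zero, one_mul, hβ0]
    rw [heval] at hy0e
    show (0:ℝ) < coeff 0 f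
    linarith
  · -- main case : d + N ≥ 1
    have hsumβ : ∑ i, β i = d + N := by rw [← hsum_fin]; exact hβ
    have hScast : (0:ℝ) < ((d + N : ℕ) : ℝ) := by exact_mod_cast hs1
    set S : ℝ := ((d + N : ℕ) : ℝ) with hSdef
    set y : Fin n → ℝ := fun i => (β i : ℝ) / S with hydef
    have hysum : ∑ i, y i = 1 := by
      rw [hydef, ← Finset.sum_div]
      have : ∑ i, ((β i : ℝ)) = S := by
        rw [hSdef, ← hsumβ]
        push_cast
        rfl
      rw [this, div_self hScast.ne']
    have hynn : ∀ i, 0 ≤ y i := by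
      intro i
      rw [hydef]
      positivity
    have hflower : fstar ≤ eval y f := hfstar.2 ⟨y, hynn, hysum, rfl⟩
    set Q : ℝ := ∑ α ∈ f.support, coeff α f * ∏ i, ((β i).descFactorial (α i) : ℝ) with hQdef
    set P : ℝ := ∑ α ∈ f.support, coeff α f * ∏ i, ((β i : ℝ)) ^ (α i) with hPdef
    -- P = S^d * eval y f
    have hPeval : P = S ^ d * eval y f := by
      rw [hPdef, eval_eq', Finset.mul_sum]
      refine Finset.sum_congr rfl ?_
      intro α hα
      have hαd : ∑ i, α i = d := by rw [← hsum_fin]; exact hdeg α hα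
      have hy : ∏ i, y i ^ α i = (∏ i, (β i : ℝ) ^ α i) / S ^ d := by
        calc ∏ i, y i ^ α i = ∏ i, ((β i : ℝ) ^ α i / S ^ α i) := by
              refine Finset.prod_congr rfl ?_
              intro i _
              rw [hydef, div_pow]
          _ = (∏ i, (β i : ℝ) ^ α i) / ∏ i, S ^ α i := Finset.prod_div_distrib _ _
          _ = (∏ i, (β i : ℝ) ^ α i) / S ^ d := by
              rw [Finset.prod_pow_eq_pow_sum, hαd]
      rw [hy]
      field_simp
    have hPlow : S ^ d * fstar ≤ P := by
      rw [hPeval]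
      have hSd : (0:ℝ) ≤ S ^ d := by positivity
      exact mul_le_mul_of_nonneg_left hflower hSd
    -- F4
    have hF4 : ∑ α ∈ g.support, coeff α g * ∏ i, ((β i : ℝ)) ^ (α i) = S ^ d := by
      have h1 : eval (fun i => (β i : ℝ)) g = S ^ d := by
        rw [hgdef, map_pow, map_sum]
        have : (∑ i, eval (fun i => (β i : ℝ)) (X i)) = S := by
          simp only [eval_X]
          rw [hSdef, ← hsumβ]
          push_cast
          rfl
        rw [this]
      rw [← h1, eval_eq']
    -- F5
    have hF5 : ∑ α ∈ g.support, coeff α g * ∏ i, ((β i).descFactorial (α i) : ℝ)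
        = ((d + N).descFactorial d : ℝ) := by
      have hkeyg := key_coeff g hgdeg β hβ
      have hcoe : ((∑ i, X i) ^ N * g : MvPolynomial (Fin n) ℝ) = (∑ i, X i) ^ (N + d) := by
        rw [hgdef, ← pow_add]
      rw [hcoe, coeff_sum_X_pow, if_pos (by rw [hβ]; omega)] at hkeyg
      have hnat2 : (∏ i, (β i).factorial) * Nat.multinomial Finset.univ ⇑β
          = N.factorial * (d + N).descFactorial d := by
        rw [Nat.multinomial_spec, hsumβ]
        have h2 := Nat.factorial_mul_descFactorial (Nat.le_add_right d N)
        have h3 : d + N - d = N := by omega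
        rw [h3] at h2
        omega
      have hcast2 : (∏ i, ((β i).factorial : ℝ)) * (Nat.multinomial Finset.univ ⇑β : ℝ)
          = (N.factorial : ℝ) * ((d + N).descFactorial d : ℝ) := by
        exact_mod_cast congrArg (Nat.cast : ℕ → ℝ) hnat2
      rw [hcast2] at hkeyg
      have hNfac : ((N.factorial : ℝ)) ≠ 0 := by positivity
      exact (mul_left_cancel₀ hNfac hkeyg).symm
    -- coefficient bound from the norm
    have hbound : ∀ α ∈ f.support, |coeff α f| ≤ L * coeff α g := by
      intro α hα
      have hαd := hdeg α hα
      rw [hgcoeff α hαd]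
      have hsup : (‖coeff α f‖₊ * (∏ i, ((α i).factorial : NNReal)) /
          (((α.sum fun _ e => e).factorial : NNReal)))
          ≤ f.support.sup (fun α : Fin n →₀ ℕ =>
            ‖coeff α f‖₊ * (∏ i, ((α i).factorial : NNReal)) /
              (((α.sum fun _ e => e).factorial : NNReal))) :=
        Finset.le_sup (f := fun α : Fin n →₀ ℕ =>
            ‖coeff α f‖₊ * (∏ i, ((α i).factorial : NNReal)) /
              (((α.sum fun _ e => e).factorial : NNReal))) hα
      rw [hαd] at hsup
      have hR : ‖coeff α f‖ * (∏ i, ((α i).factorial : ℝ)) / (d.factorial : ℝ) ≤ L := by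
        rw [hLdef]
        unfold wnorm
        have h2 := NNReal.coe_le_coe.2 hsup
        push_cast at h2
        convert h2 using 2
      have hspec : (∏ i, (α i).factorial) * Nat.multinomial Finset.univ ⇑α = d.factorial := by
        rw [Nat.multinomial_spec, ← hsum_fin]
        rw [hαd]
      have hdf : (d.factorial : ℝ)
          = (∏ i, ((α i).factorial : ℝ)) * (Nat.multinomial Finset.univ ⇑α : ℝ) := by
        exact_mod_cast hspec.symm
      have hppos : (0:ℝ) < ∏ i, ((α i).factorial : ℝ) := by positivity
      rw [div_le_iff₀ (by positivity : (0:ℝ) < (d.factorial : ℝ))] at hR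
      rw [hdf] at hR
      have h3 : ‖coeff α f‖ * (∏ i, ((α i).factorial : ℝ))
          ≤ (L * (Nat.multinomial Finset.univ ⇑α : ℝ)) * (∏ i, ((α i).factorial : ℝ)) := by
        nlinarith
      have h4 := le_of_mul_le_mul_right h3 hppos
      rw [← Real.norm_eq_abs]
      exact h4
    -- termwise : desc ≤ pow
    have hDB : ∀ α : Fin n →₀ ℕ,
        (∏ i, ((β i).descFactorial (α i) : ℝ)) ≤ ∏ i, ((β i : ℝ)) ^ (α i) := by
      intro α
      refine Finset.prod_le_prod (fun i _ => by positivity) ?_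
      intro i _
      exact_mod_cast Nat.descFactorial_le_pow (β i) (α i)
    -- |P - Q| ≤ L * (S^d - desc)
    have habs : |P - Q| ≤ L * (S ^ d - ((d + N).descFactorial d : ℝ)) := by
      have hPQ : P - Q = ∑ α ∈ f.support,
          coeff α f * ((∏ i, ((β i : ℝ)) ^ (α i)) - ∏ i, ((β i).descFactorial (α i) : ℝ)) := by
        rw [hPdef, hQdef, ← Finset.sum_sub_distrib]
        exact Finset.sum_congr rfl (fun α _ => by ring)
      rw [hPQ]
      calc |∑ α ∈ f.support, coeff α f *
            ((∏ i, ((β i : ℝ)) ^ (α i)) - ∏ i, ((β i).descFactorial (α i) : ℝ))|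
          ≤ ∑ α ∈ f.support, |coeff α f *
            ((∏ i, ((β i : ℝ)) ^ (α i)) - ∏ i, ((β i).descFactorial (α i) : ℝ))| :=
            Finset.abs_sum_le_sum_abs _ _
        _ ≤ ∑ α ∈ f.support, (L * coeff α g) *
            ((∏ i, ((β i : ℝ)) ^ (α i)) - ∏ i, ((β i).descFactorial (α i) : ℝ)) := by
            refine Finset.sum_le_sum ?_
            intro α hα
            rw [abs_mul, abs_of_nonneg (sub_nonneg.2 (hDB α))]
            exact mul_le_mul_of_nonneg_right (hbound α hα) (sub_nonneg.2 (hDB α))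
        _ ≤ ∑ α ∈ g.support, (L * coeff α g) *
            ((∏ i, ((β i : ℝ)) ^ (α i)) - ∏ i, ((β i).descFactorial (α i) : ℝ)) := by
            refine Finset.sum_le_sum_of_subset_of_nonneg hsubset ?_
            intro α hα _
            have h1 := hgcoeff_nn α hα
            have h2 := sub_nonneg.2 (hDB α)
            positivity
        _ = L * (S ^ d - ((d + N).descFactorial d : ℝ)) := by
            rw [← hF4, ← hF5, ← Finset.sum_sub_distrib, Finset.mul_sum]
            exact Finset.sum_congr rfl (fun α _ => by ring)
    -- F6 cast
    have hF6 : S ^ d - ((d + N).descFactorial d : ℝ) ≤ (d.choose 2 : ℝ) * S ^ (d - 1) := by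
      have h1 := pow_le_desc_add d (d + N)
      have h2 : ((d + N : ℕ) : ℝ) ^ d ≤ ((d + N).descFactorial d : ℝ)
          + (d.choose 2 : ℝ) * ((d + N : ℕ) : ℝ) ^ (d - 1) := by exact_mod_cast h1
      rw [hSdef]
      linarith
    -- the numeric inequality from hN
    have hc2 : (d.choose 2 : ℝ) * L < S * fstar := by
      have h2f : (0:ℝ) < 2 * fstar := by linarith
      rw [Nat.cast_choose_two]
      have hN' : (d:ℝ) * ((d:ℝ) - 1) * L / (2 * fstar) < (N:ℝ) + d := by linarith
      rw [div_lt_iff₀ h2f] at hN'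
      have hSNd : S = (N:ℝ) + d := by rw [hSdef]; push_cast; ring
      rw [hSNd]
      nlinarith
    -- conclude Q > 0
    have hQpos : 0 < Q := by
      have h1 : P - Q ≤ |P - Q| := le_abs_self _
      rcases Nat.eq_zero_or_pos d with hd0 | hd1
      · subst hd0
        have habs0 : |P - Q| ≤ L * (S ^ 0 - ((0 + N).descFactorial 0 : ℝ)) := habs
        simp only [pow_zero, Nat.descFactorial_zero, Nat.cast_one, sub_self, mul_zero] at habs0
        have hPl : fstar ≤ P := by
          have := hPlow
          rw [pow_zero, one_mul] at this
          exact this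
        linarith
      · have hSd : S ^ d = S ^ (d - 1) * S := by
          rw [← pow_succ]
          congr 1
          omega
        have hSd1 : (0:ℝ) < S ^ (d - 1) := by positivity
        have e1 : L * (S ^ d - ((d + N).descFactorial d : ℝ))
            ≤ L * ((d.choose 2 : ℝ) * S ^ (d - 1)) := mul_le_mul_of_nonneg_left hF6 hL0
        have e2 : (0:ℝ) < S ^ (d - 1) * (S * fstar - (d.choose 2 : ℝ) * L) :=
          mul_pos hSd1 (by linarith)
        have e3 : S ^ (d - 1) * (S * fstar - (d.choose 2 : ℝ) * L)
            = S ^ d * fstar - L * ((d.choose 2 : ℝ) * S ^ (d - 1)) := by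
          rw [hSd]; ring
        linarith
    -- conclude
    have hkeyf := key_coeff f hdeg β hβ
    have hprod : (0:ℝ) < ∏ i, ((β i).factorial : ℝ) := by positivity
    have hNf : (0:ℝ) < (N.factorial : ℝ) := by positivity
    have hpos2 : (0:ℝ) < (∏ i, ((β i).factorial : ℝ)) * coeff β ((∑ i, X i) ^ N * f) := by
      rw [hkeyf]
      exact mul_pos hNf hQpos
    rcases mul_pos_iff.1 hpos2 with ⟨_, h⟩ | ⟨h1', _⟩
    · exact h
    · linarith
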